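/- Let S be a Suslin line and let X be the one-point compactification of S. Then X is a compact Hausdorff space with the countable chain condition, while X × X does not have the countable chain condition; consequently, C(X) is a unital commutative C*-algebra with the countable chain condition such that C(X × X) does not have the countable chain condition. -/

import Mathlib

/-- A topological space has the countable chain condition (CCC) if every family of
pairwise disjoint nonempty open subsets is countable. -/
def TopCCC (X : Type*) [TopologicalSpace X] : Prop :=
  ∀ 𝒰 : Set (Set X), (∀ U ∈ 𝒰, IsOpen U) → (∀ U ∈ 𝒰, U.Nonempty) →
    𝒰.Pairwise Disjoint → 𝒰.Countable

/-- A C*-algebra has the countable chain condition (CCC) if every family of pairwise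
orthogonal nonzero closed two-sided ideals is countable; two closed two-sided ideals are
orthogonal if their intersection is the zero ideal.  (Only the ring and topological
structure of the algebra are needed to state this.) -/
def CStarCCC (A : Type*) [NonUnitalNonAssocRing A] [TopologicalSpace A] : Prop :=
  ∀ 𝒮 : Set (TwoSidedIdeal A), (∀ I ∈ 𝒮, IsClosed (I : Set A)) →
    (∀ I ∈ 𝒮, I ≠ ⊥) → (𝒮.Pairwise fun I J => I ⊓ J = ⊥) → 𝒮.Countable

/-- A Suslin line is a linearly ordered set, equipped with the order topology, which is
unbounded (no minimum and no maximum), densely ordered, complete (every nonempty set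
bounded above has a least upper bound and every nonempty set bounded below has a greatest
lower bound), has the countable chain condition but is not separable. -/
def IsSuslinLine (S : Type*) [LinearOrder S] [TopologicalSpace S] [OrderTopology S] :
    Prop :=
  NoMinOrder S ∧ NoMaxOrder S ∧ DenselyOrdered S ∧
    (∀ s : Set S, s.Nonempty → BddAbove s → ∃ a, IsLUB s a) ∧
    (∀ s : Set S, s.Nonempty → BddBelow s → ∃ a, IsGLB s a) ∧
    TopCCC S ∧ ¬TopologicalSpace.SeparableSpace S


open Set Cardinal
open Set OnePoint in
lemma topCCC_onePoint {S : Type*} [TopologicalSpace S] (h : TopCCC S) : TopCCC (OnePoint S) := by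
  intro 𝒰 hopen hne hdisj
  have hA : ({U ∈ 𝒰 | (∞ : OnePoint S) ∈ U}).Subsingleton := by
    intro U hU V hV
    by_contra hne'
    exact absurd (hdisj hU.1 hV.1 hne' (singleton_subset_iff.2 hU.2)
      (singleton_subset_iff.2 hV.2)) (by simp)
  have hB : ({U ∈ 𝒰 | (∞ : OnePoint S) ∉ U}).Countable := by
    have hinj : Set.InjOn (fun U : Set (OnePoint S) => ((↑) : S → OnePoint S) ⁻¹' U)
        {U ∈ 𝒰 | (∞ : OnePoint S) ∉ U} := by
      intro U hU V hV hUV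
      have hU' : U ⊆ Set.range ((↑) : S → OnePoint S) := by
        intro x hx
        rcases x with _ | x
        · exact absurd hx hU.2
        · exact ⟨x, rfl⟩
      have hV' : V ⊆ Set.range ((↑) : S → OnePoint S) := by
        intro x hx
        rcases x with _ | x
        · exact absurd hx hV.2
        · exact ⟨x, rfl⟩
      simp only at hUV
      rw [← Set.image_preimage_eq_of_subset hU', ← Set.image_preimage_eq_of_subset hV', hUV]
    have := h ((fun U : Set (OnePoint S) => ((↑) : S → OnePoint S) ⁻¹' U) ''
        {U ∈ 𝒰 | (∞ : OnePoint S) ∉ U}) ?_ ?_ ?_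
    · exact (Set.countable_of_injective_of_countable_image hinj this)
    · rintro _ ⟨U, hU, rfl⟩
      exact (hopen U hU.1).preimage OnePoint.continuous_coe
    · rintro _ ⟨U, hU, rfl⟩
      obtain ⟨x, hx⟩ := hne U hU.1
      rcases x with _ | x
      · exact absurd hx hU.2
      · exact ⟨x, hx⟩
    · rintro _ ⟨U, hU, rfl⟩ _ ⟨V, hV, rfl⟩ hne'
      have : U ≠ V := fun e => hne' (by rw [e])
      exact Disjoint.preimage _ (hdisj hU.1 hV.1 this)
  have : 𝒰 = {U ∈ 𝒰 | (∞ : OnePoint S) ∈ U} ∪ {U ∈ 𝒰 | (∞ : OnePoint S) ∉ U} := by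
    ext U; by_cases hU : (∞ : OnePoint S) ∈ U <;> simp [hU]
  rw [this]
  exact (hA.countable).union hB

/-- The open set associated to an ideal of `C(X, ℂ)`. -/
def idealSupp {X : Type*} [TopologicalSpace X] (I : TwoSidedIdeal C(X, ℂ)) : Set X :=
  {x | ∃ f ∈ I, f x ≠ 0}

lemma isOpen_idealSupp {X : Type*} [TopologicalSpace X] (I : TwoSidedIdeal C(X, ℂ)) :
    IsOpen (idealSupp I) := by
  have : idealSupp I = ⋃ f ∈ (I : Set C(X, ℂ)), {x | f x ≠ 0} := by
    ext x; simp [idealSupp]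
  rw [this]
  exact isOpen_biUnion fun f _ => isOpen_ne.preimage f.continuous

lemma idealSupp_nonempty {X : Type*} [TopologicalSpace X] {I : TwoSidedIdeal C(X, ℂ)}
    (hI : I ≠ ⊥) : (idealSupp I).Nonempty := by
  obtain ⟨f, hfI, hf⟩ : ∃ f, f ∈ I ∧ f ≠ 0 := by
    by_contra hc
    push_neg at hc
    exact hI (by
      ext g
      simp only [TwoSidedIdeal.mem_bot]
      exact ⟨fun hg => hc g hg, fun hg => hg ▸ I.zero_mem⟩)
  obtain ⟨x, hx⟩ : ∃ x, f x ≠ 0 := by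
    by_contra hc
    push_neg at hc
    exact hf (ContinuousMap.ext fun x => hc x)
  exact ⟨x, f, hfI, hx⟩

lemma idealSupp_disjoint {X : Type*} [TopologicalSpace X] {I J : TwoSidedIdeal C(X, ℂ)}
    (h : I ⊓ J = ⊥) : Disjoint (idealSupp I) (idealSupp J) := by
  rw [Set.disjoint_left]
  rintro x ⟨f, hfI, hfx⟩ ⟨g, hgJ, hgx⟩
  have : f * g ∈ I ⊓ J := (TwoSidedIdeal.mem_inf _).2 ⟨I.mul_mem_right _ _ hfI, J.mul_mem_left _ _ hgJ⟩
  rw [h, TwoSidedIdeal.mem_bot] at this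
  have : (f * g) x = 0 := by rw [this]; rfl
  rw [ContinuousMap.mul_apply] at this
  exact hfx (by
    rcases mul_eq_zero.1 this with h' | h'
    · exact h'
    · exact absurd h' hgx)

lemma cstarCCC_of_topCCC {X : Type*} [TopologicalSpace X] (h : TopCCC X) : CStarCCC C(X, ℂ) := by
  intro 𝒮 _ hbot horth
  have hinj : Set.InjOn idealSupp 𝒮 := by
    intro I hI J hJ hIJ
    by_contra hne
    have h1 := idealSupp_disjoint (horth hI hJ hne)
    rw [hIJ] at h1
    exact absurd (disjoint_self.1 h1) (idealSupp_nonempty (hbot J hJ)).ne_empty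
  have := h (idealSupp '' 𝒮) (by rintro _ ⟨I, _, rfl⟩; exact isOpen_idealSupp I)
    (by rintro _ ⟨I, hI, rfl⟩; exact idealSupp_nonempty (hbot I hI))
    (by
      rintro _ ⟨I, hI, rfl⟩ _ ⟨J, hJ, rfl⟩ hne
      exact idealSupp_disjoint (horth hI hJ (fun e => hne (by rw [e]))))
  exact Set.countable_of_injective_of_countable_image hinj this

/-- The vanishing ideal of the complement of `U`. -/
noncomputable def vIdeal {Y : Type*} [TopologicalSpace Y] (U : Set Y) : TwoSidedIdeal C(Y, ℂ) :=
  TwoSidedIdeal.mk' {f : C(Y, ℂ) | ∀ x ∉ U, f x = 0}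
    (fun x _ => rfl)
    (fun hf hg x hx => by simp [hf x hx, hg x hx])
    (fun hf x hx => by simp [hf x hx])
    (fun hg x hx => by simp [hg x hx])
    (fun hf x hx => by simp [hf x hx])

lemma mem_vIdeal {Y : Type*} [TopologicalSpace Y] {U : Set Y} {f : C(Y, ℂ)} :
    f ∈ vIdeal U ↔ ∀ x ∉ U, f x = 0 := TwoSidedIdeal.mem_mk' _ _ _ _ _ _ _

lemma isClosed_vIdeal {Y : Type*} [TopologicalSpace Y] [CompactSpace Y] (U : Set Y) :
    IsClosed ((vIdeal U : TwoSidedIdeal C(Y, ℂ)) : Set C(Y, ℂ)) := by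
  have : ((vIdeal U : TwoSidedIdeal C(Y, ℂ)) : Set C(Y, ℂ)) =
      ⋂ x ∈ Uᶜ, {f : C(Y, ℂ) | f x = 0} := by
    ext f
    simp only [Set.mem_iInter, SetLike.mem_coe, mem_vIdeal, mem_compl_iff, mem_setOf_eq]
  rw [this]
  exact isClosed_biInter fun x _ => isClosed_singleton.preimage (continuous_eval_const x)

lemma exists_vIdeal_fun {Y : Type*} [TopologicalSpace Y] [NormalSpace Y] [T1Space Y]
    {U : Set Y} (hU : IsOpen U) {y : Y} (hy : y ∈ U) :
    ∃ f : C(Y, ℂ), f ∈ vIdeal U ∧ f y = 1 := by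
  obtain ⟨g, hg0, hg1, -⟩ := exists_continuous_zero_one_of_isClosed hU.isClosed_compl
    (isClosed_singleton (x := y)) (by
      rw [Set.disjoint_left]
      rintro x hx rfl
      exact hx hy)
  refine ⟨(ContinuousMap.mk (fun t : ℝ => (t : ℂ)) (by continuity)).comp g, ?_, ?_⟩
  · rw [mem_vIdeal]
    intro x hx
    simp [ContinuousMap.comp_apply, hg0 hx]
  · simp [ContinuousMap.comp_apply, hg1 (Set.mem_singleton y)]

lemma vIdeal_ne_bot {Y : Type*} [TopologicalSpace Y] [NormalSpace Y] [T1Space Y]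
    {U : Set Y} (hU : IsOpen U) (hne : U.Nonempty) : vIdeal U ≠ ⊥ := by
  obtain ⟨y, hy⟩ := hne
  obtain ⟨f, hf, hf1⟩ := exists_vIdeal_fun hU hy
  intro hb
  rw [hb, TwoSidedIdeal.mem_bot] at hf
  rw [hf] at hf1
  simpa using hf1

lemma vIdeal_orth {Y : Type*} [TopologicalSpace Y] {U V : Set Y} (h : Disjoint U V) :
    vIdeal U ⊓ vIdeal V = (⊥ : TwoSidedIdeal C(Y, ℂ)) := by
  refine TwoSidedIdeal.ext fun f => ?_
  rw [TwoSidedIdeal.mem_inf, TwoSidedIdeal.mem_bot]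
  constructor
  · rintro ⟨h1, h2⟩
    rw [mem_vIdeal] at h1 h2
    ext x
    by_cases hx : x ∈ U
    · exact (h2 x (Set.disjoint_left.1 h hx)).trans rfl
    · exact (h1 x hx).trans rfl
  · rintro rfl
    exact ⟨(vIdeal U).zero_mem, (vIdeal V).zero_mem⟩

lemma not_cstarCCC_of_not_topCCC {Y : Type*} [TopologicalSpace Y] [CompactSpace Y]
    [NormalSpace Y] [T1Space Y] (h : ¬TopCCC Y) : ¬CStarCCC C(Y, ℂ) := by
  intro hC
  apply h
  intro 𝒰 hopen hne hdisj
  have hinj : Set.InjOn (vIdeal (Y := Y)) 𝒰 := by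
    intro U hU V hV hUV
    by_contra hne'
    obtain ⟨y, hy⟩ := hne U hU
    obtain ⟨f, hf, hf1⟩ := exists_vIdeal_fun (hopen U hU) hy
    rw [hUV, mem_vIdeal] at hf
    have : y ∉ V := Set.disjoint_left.1 (hdisj hU hV hne') hy
    rw [hf y this] at hf1
    simpa using hf1
  have := hC (vIdeal '' 𝒰)
    (by rintro _ ⟨U, _, rfl⟩; exact isClosed_vIdeal U)
    (by rintro _ ⟨U, hU, rfl⟩; exact vIdeal_ne_bot (hopen U hU) (hne U hU))
    (by
      rintro _ ⟨U, hU, rfl⟩ _ ⟨V, hV, rfl⟩ hne'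
      exact vIdeal_orth (hdisj hU hV (fun e => hne' (by rw [e]))))
  exact Set.countable_of_injective_of_countable_image hinj this

section Suslin
variable {S : Type*} [LinearOrder S] [TopologicalSpace S] [OrderTopology S]
  [DenselyOrdered S] [NoMinOrder S] [NoMaxOrder S] [Nonempty S]

lemma suslin_interval (hsep : ¬TopologicalSpace.SeparableSpace S)
    (D : Set S) (hD : D.Countable) :
    ∃ a b c : S, a < b ∧ b < c ∧ ∀ x ∈ D, x ∉ Set.Ioo a c := by
  have hcl : closure D ≠ Set.univ := by
    intro hcl
    exact hsep ⟨⟨D, hD, dense_iff_closure_eq.2 hcl⟩⟩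
  have hopen : IsOpen (closure D)ᶜ := isClosed_closure.isOpen_compl
  have hne : ((closure D)ᶜ).Nonempty := by
    rw [nonempty_compl]; exact hcl
  have : Nontrivial S := by
    obtain ⟨x⟩ := ‹Nonempty S›
    obtain ⟨y, hy⟩ := exists_gt x
    exact ⟨x, y, hy.ne⟩
  obtain ⟨a, c, hac, hsub⟩ := hopen.exists_Ioo_subset hne
  obtain ⟨b, hab, hbc⟩ := exists_between hac
  exact ⟨a, b, c, hab, hbc, fun x hx hmem => (hsub hmem) (subset_closure hx)⟩

/-- One step of the transfinite construction. -/
noncomputable def suslinStep (hsep : ¬TopologicalSpace.SeparableSpace S)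
    (D : Set S) (hD : D.Countable) : S × S × S :=
  ((suslin_interval hsep D hD).choose,
   (suslin_interval hsep D hD).choose_spec.choose,
   (suslin_interval hsep D hD).choose_spec.choose_spec.choose)

lemma suslinStep_spec (hsep : ¬TopologicalSpace.SeparableSpace S)
    (D : Set S) (hD : D.Countable) :
    (suslinStep hsep D hD).1 < (suslinStep hsep D hD).2.1 ∧
    (suslinStep hsep D hD).2.1 < (suslinStep hsep D hD).2.2 ∧
    ∀ x ∈ D, x ∉ Set.Ioo (suslinStep hsep D hD).1 (suslinStep hsep D hD).2.2 :=
  (suslin_interval hsep D hD).choose_spec.choose_spec.choose_spec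

lemma iio_countable (w : (Cardinal.aleph 1).ord.ToType) : Countable {v // v < w} :=
  (((countable_iff_lt_aleph_one (Set.Iio w)).2 (Cardinal.mk_Iio_ord_toType w))).to_subtype

/-- Transfinite construction of the triples. -/
noncomputable def suslinTriple (hsep : ¬TopologicalSpace.SeparableSpace S) :
    (Cardinal.aleph 1).ord.ToType → S × S × S :=
  (IsWellFounded.wf (r := ((· < ·) : (Cardinal.aleph 1).ord.ToType → _ → Prop))).fix
    (fun w ih =>
      suslinStep hsep (Set.range fun v : {v // v < w} => (ih v.1 v.2).2.1)
        (have := iio_countable w; Set.countable_range _))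

lemma suslinTriple_eq (hsep : ¬TopologicalSpace.SeparableSpace S)
    (w : (Cardinal.aleph 1).ord.ToType) :
    suslinTriple hsep w =
      suslinStep hsep (Set.range fun v : {v // v < w} => (suslinTriple hsep v.1).2.1)
        (have := iio_countable w; Set.countable_range _) :=
  WellFounded.fix_eq _ _ w

lemma suslinTriple_spec (hsep : ¬TopologicalSpace.SeparableSpace S)
    (w : (Cardinal.aleph 1).ord.ToType) :
    (suslinTriple hsep w).1 < (suslinTriple hsep w).2.1 ∧
    (suslinTriple hsep w).2.1 < (suslinTriple hsep w).2.2 ∧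
    ∀ v, v < w → (suslinTriple hsep v).2.1 ∉
      Set.Ioo (suslinTriple hsep w).1 (suslinTriple hsep w).2.2 := by
  rw [suslinTriple_eq hsep w]
  have h := suslinStep_spec hsep (Set.range fun v : {v // v < w} => (suslinTriple hsep v.1).2.1)
    (have := iio_countable w; Set.countable_range _)
  exact ⟨h.1, h.2.1, fun v hv => h.2.2 _ ⟨⟨v, hv⟩, rfl⟩⟩

end Suslin

section Suslin2
variable {S : Type*} [LinearOrder S] [TopologicalSpace S] [OrderTopology S]
  [DenselyOrdered S] [NoMinOrder S] [NoMaxOrder S] [Nonempty S]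

open OnePoint

/-- The open boxes in the square of the one-point compactification. -/
noncomputable def suslinBox (hsep : ¬TopologicalSpace.SeparableSpace S)
    (w : (Cardinal.aleph 1).ord.ToType) : Set (OnePoint S × OnePoint S) :=
  (((↑) : S → OnePoint S) '' Set.Ioo (suslinTriple hsep w).1 (suslinTriple hsep w).2.1) ×ˢ
  (((↑) : S → OnePoint S) '' Set.Ioo (suslinTriple hsep w).2.1 (suslinTriple hsep w).2.2)

lemma suslinBox_disjoint_of_lt (hsep : ¬TopologicalSpace.SeparableSpace S)
    {v w : (Cardinal.aleph 1).ord.ToType} (hvw : v < w) :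
    Disjoint (suslinBox hsep v) (suslinBox hsep w) := by
  set fv := suslinTriple hsep v with hfv
  set fw := suslinTriple hsep w with hfw
  have hb : fv.2.1 ∉ Set.Ioo fw.1 fw.2.2 := (suslinTriple_spec hsep w).2.2 v hvw
  rw [Set.disjoint_left]
  rintro ⟨p, q⟩ ⟨hp, hq⟩ ⟨hp', hq'⟩
  simp only [suslinBox, Set.mem_prod] at *
  obtain ⟨x, hx, rfl⟩ := hp
  obtain ⟨y, hy, rfl⟩ := hq
  obtain ⟨x', hx', hxe⟩ := hp'
  obtain ⟨y', hy', hye⟩ := hq'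
  rw [OnePoint.coe_eq_coe] at hxe hye
  subst hxe; subst hye
  rw [Set.mem_Ioo] at hx hy hx' hy' hb
  push_neg at hb
  rcases le_or_gt fv.2.1 fw.1 with h | h
  · exact absurd (hx.2.trans_le (h.trans hx'.1.le)) (lt_irrefl _)
  · have hc : fw.2.2 ≤ fv.2.1 := hb h
    exact absurd (hy'.2.trans_le (hc.trans hy.1.le)) (lt_irrefl _)

lemma suslinBox_nonempty (hsep : ¬TopologicalSpace.SeparableSpace S)
    (w : (Cardinal.aleph 1).ord.ToType) : (suslinBox hsep w).Nonempty := by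
  obtain ⟨h1, h2, -⟩ := suslinTriple_spec hsep w
  obtain ⟨x, hx⟩ := exists_between h1
  obtain ⟨y, hy⟩ := exists_between h2
  exact ⟨(x, y), ⟨x, hx, rfl⟩, ⟨y, hy, rfl⟩⟩

lemma suslinBox_isOpen (hsep : ¬TopologicalSpace.SeparableSpace S)
    (w : (Cardinal.aleph 1).ord.ToType) : IsOpen (suslinBox hsep w) :=
  ((OnePoint.isOpenEmbedding_coe.isOpenMap _ isOpen_Ioo)).prod
    (OnePoint.isOpenEmbedding_coe.isOpenMap _ isOpen_Ioo)

lemma not_topCCC_prod (hsep : ¬TopologicalSpace.SeparableSpace S) :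
    ¬TopCCC (OnePoint S × OnePoint S) := by
  intro h
  have hdisj : ∀ v w, v ≠ w → Disjoint (suslinBox hsep v) (suslinBox hsep w) := by
    intro v w hvw
    rcases lt_or_gt_of_ne hvw with h' | h'
    · exact suslinBox_disjoint_of_lt hsep h'
    · exact (suslinBox_disjoint_of_lt hsep h').symm
  have hinj : Function.Injective (suslinBox hsep) := by
    intro v w hvw
    by_contra hne
    exact absurd (disjoint_self.1 (hvw ▸ hdisj v w hne)) (suslinBox_nonempty hsep w).ne_empty
  have hcnt := h (Set.range (suslinBox hsep))
    (by rintro _ ⟨w, rfl⟩; exact suslinBox_isOpen hsep w)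
    (by rintro _ ⟨w, rfl⟩; exact suslinBox_nonempty hsep w)
    (by
      rintro _ ⟨v, rfl⟩ _ ⟨w, rfl⟩ hne
      exact hdisj v w (fun e => hne (by rw [e])))
  rw [countable_iff_lt_aleph_one, Cardinal.mk_range_eq _ hinj, Cardinal.mk_ord_toType] at hcnt
  exact absurd hcnt (lt_irrefl _)

end Suslin2

noncomputable def suslinCCLO (S : Type*) [LinearOrder S] [Nonempty S] [NoMaxOrder S]
    (hsup : ∀ s : Set S, s.Nonempty → BddAbove s → ∃ a, IsLUB s a) :
    ConditionallyCompleteLinearOrder S :=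
  letI dec : ∀ p : Prop, Decidable p := Classical.propDecidable
  letI : SupSet S := ⟨fun s =>
    if h : s.Nonempty ∧ BddAbove s then (hsup s h.1 h.2).choose else Classical.arbitrary S⟩
  have hlub : ∀ s : Set S, BddAbove s → s.Nonempty → IsLUB s (sSup s) := fun s hb hn => by
    show IsLUB s (if h : s.Nonempty ∧ BddAbove s then (hsup s h.1 h.2).choose
      else Classical.arbitrary S)
    rw [dif_pos ⟨hn, hb⟩]
    exact (hsup s hn hb).choose_spec
  have hnb : ∀ s : Set S, ¬(s.Nonempty ∧ BddAbove s) → sSup s = Classical.arbitrary S :=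
    fun s hs => dif_neg hs
  have huniv : ¬BddAbove (Set.univ : Set S) := by
    rintro ⟨a, ha⟩
    obtain ⟨b, hb⟩ := exists_gt a
    exact absurd (ha (Set.mem_univ b)) (not_le.2 hb)
  { conditionallyCompleteLatticeOfsSup S
      (fun a b => ⟨max a b, by
        rintro x (rfl | rfl)
        · exact le_max_left _ _
        · simp⟩)
      (fun a b => ⟨min a b, by
        rintro x (rfl | rfl)
        · exact min_le_left _ _
        · simp⟩)
      hlub,
    (inferInstance : LinearOrder S) with
    csSup_of_not_bddAbove := fun s hs => by
      rw [hnb s (fun hc => hs hc.2), hnb ∅ (fun hc => Set.not_nonempty_empty hc.1)]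
    csInf_of_not_bddBelow := fun s hs => by
      show sSup (lowerBounds s) = sSup (lowerBounds ∅)
      rw [hnb (lowerBounds s) (fun hc => hs hc.1), lowerBounds_empty,
        hnb univ (fun hc => huniv hc.2)] }

lemma suslin_locallyCompact {S : Type*} [LinearOrder S] [TopologicalSpace S] [OrderTopology S]
    [DenselyOrdered S] [NoMinOrder S] [NoMaxOrder S] [CompactIccSpace S] :
    LocallyCompactSpace S := by
  refine ⟨fun x n hn => ?_⟩
  obtain ⟨l, u, hx, hsub⟩ := (mem_nhds_iff_exists_Ioo_subset' (exists_lt x) (exists_gt x)).1 hn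
  obtain ⟨l', hl1, hl2⟩ := exists_between hx.1
  obtain ⟨u', hu1, hu2⟩ := exists_between hx.2
  refine ⟨Set.Icc l' u', ?_, ?_, isCompact_Icc⟩
  · exact Filter.mem_of_superset (isOpen_Ioo.mem_nhds ⟨hl2, hu1⟩) Set.Ioo_subset_Icc_self
  · exact fun t ht => hsub ⟨hl1.trans_le ht.1, ht.2.trans_lt hu2⟩

open OnePoint in
/-- If `S` is a Suslin line and `X` its one-point compactification, then `X` is a compact
Hausdorff space with the countable chain condition while `X × X` does not have the
countable chain condition; consequently `C(X, ℂ)` is a (unital commutative) C*-algebra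
with the countable chain condition while `C(X × X, ℂ)` does not have the countable chain
condition. -/
theorem stmt_12 (S : Type*) [LinearOrder S] [TopologicalSpace S] [OrderTopology S]
    (h : IsSuslinLine S) :
    CompactSpace (OnePoint S) ∧ T2Space (OnePoint S) ∧ TopCCC (OnePoint S) ∧
      ¬TopCCC (OnePoint S × OnePoint S) ∧
      CStarCCC C(OnePoint S, ℂ) ∧ ¬CStarCCC C(OnePoint S × OnePoint S, ℂ) := by
  obtain ⟨hmin, hmax, hdense, hsup, hinf, hccc, hsep⟩ := h
  haveI := hmin; haveI := hmax; haveI := hdense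
  haveI hne : Nonempty S := by
    by_contra hS
    rw [not_nonempty_iff] at hS
    exact hsep inferInstance
  letI := suslinCCLO S hsup
  haveI : CompactIccSpace S :=
    @ConditionallyCompleteLinearOrder.toCompactIccSpace S (suslinCCLO S hsup) _ ‹OrderTopology S›
  haveI : LocallyCompactSpace S := @suslin_locallyCompact S _ _ _ _ _ _ (by exact this)
  have hX : TopCCC (OnePoint S) := topCCC_onePoint hccc
  have hXX : ¬TopCCC (OnePoint S × OnePoint S) := not_topCCC_prod hsep
  exact ⟨inferInstance, inferInstance, hX, hXX, cstarCCC_of_topCCC hX,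
    not_cstarCCC_of_not_topCCC hXX⟩
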